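/- arXiv:2204.04389 — 3 statements merged into one kernel-verified Lean document; each statement's English description precedes it below -/
import Mathlib

section
/- Let G be an abelian topological group, C ⊆ G with 0 ∈ C, and n a positive integer. Then ((n)C)^▷ = (C^▷)₍ₙ₎, where C^▷ = {χ ∈ Ĝ : χ(C) ⊆ S₊} is the polar of C and (C^▷)₍ₙ₎ = {χ : χ, 2χ, …, nχ ∈ C^▷}. -/
open scoped Pointwise Topology
open Complex Real

variable (G : Type*) [AddCommGroup G] [TopologicalSpace G] [IsTopologicalAddGroup G]

/-- A (continuous) character of `G` with values in the circle group. -/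
def IsChar (χ : G → Circle) : Prop :=
  Continuous χ ∧ ∀ x y : G, χ (x + y) = χ x * χ y

/-- `S₊ = {z ∈ S : Re z ≥ 0}`. -/
def Splus : Set Circle := {z | 0 ≤ (z : ℂ).re}

/-- The character group `Ĝ`, as a set of functions `G → Circle`. -/
def charSet : Set (G → Circle) := {χ | IsChar G χ}

/-- The inverse polar `B^◁ = {g ∈ G : χ(g) ∈ S₊ ∀ χ ∈ B}` of a set of characters. -/
def invPolar (B : Set (G → Circle)) : Set G := {g | ∀ χ ∈ B, χ g ∈ Splus}

/-- The polar `A^▷ = {χ ∈ Ĝ : χ(A) ⊆ S₊}` of a subset of `G`. -/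
def polarG (A : Set G) : Set (G → Circle) := {χ | IsChar G χ ∧ ∀ g ∈ A, χ g ∈ Splus}

/-- The `n`-fold sumset `(n)K` of a set of characters (written multiplicatively). -/
def mpow (K : Set (G → Circle)) : ℕ → Set (G → Circle)
  | 0 => {1}
  | n + 1 => mpow K n * K

/-- The `n`-fold sumset `(n)A` of a subset of `G`. -/
def addPow (A : Set G) : ℕ → Set G
  | 0 => {0}
  | n + 1 => addPow A n + A

/-- `C₍ₙ₎ = {g ∈ G : g, 2g, …, ng ∈ C}`. -/
def seg (n : ℕ) (C : Set G) : Set G := {g | ∀ k ∈ Finset.Icc 1 n, k • g ∈ C}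

/-- `A₍ₙ₎ = {χ : χ, 2χ, …, nχ ∈ A}` for a set of characters. -/
def segMul (n : ℕ) (A : Set (G → Circle)) : Set (G → Circle) :=
  {χ | ∀ k ∈ Finset.Icc 1 n, χ ^ k ∈ A}

/-! ### Auxiliary lemmas -/

lemma Circle.re_exp (t : ℝ) : ((Circle.exp t : Circle) : ℂ).re = Real.cos t := by
  simp [Circle.coe_exp, Complex.exp_mul_I, Complex.cos_ofReal_re]

lemma Circle.exp_nsmul' (t : ℝ) (k : ℕ) : Circle.exp t ^ k = Circle.exp (k * t) := by
  induction k with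
  | zero => simp
  | succ m ih =>
    rw [pow_succ, ih, ← Circle.exp_add]
    congr 1
    push_cast
    ring

/-- Key analytic lemma: if `z^k ∈ S₊` for `k = 1, …, n`, then `|arg z| ≤ π/(2n)`. -/
lemma arg_bound (n : ℕ) (hn : 0 < n) (z : Circle)
    (h : ∀ k ∈ Finset.Icc 1 n, 0 ≤ ((z ^ k : Circle) : ℂ).re) :
    |Complex.arg (z : ℂ)| ≤ π / (2 * n) := by
  set s : ℝ := |Complex.arg (z : ℂ)| with hs
  have harg1 : -π < Complex.arg (z : ℂ) := Complex.neg_pi_lt_arg _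
  have harg2 : Complex.arg (z : ℂ) ≤ π := Complex.arg_le_pi _
  have hcos : ∀ k ∈ Finset.Icc 1 n, 0 ≤ Real.cos (k * s) := by
    intro k hk
    have hz : z = Circle.exp (Complex.arg (z : ℂ)) := (Circle.exp_arg z).symm
    have : ((z ^ k : Circle) : ℂ).re = Real.cos (k * Complex.arg (z : ℂ)) := by
      conv_lhs => rw [hz]
      rw [Circle.exp_nsmul', Circle.re_exp]
    have h0 := h k hk
    rw [this] at h0
    rcases abs_cases (Complex.arg (z : ℂ)) with ⟨he, _⟩ | ⟨he, _⟩
    · rwa [hs, he]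
    · rw [hs, he, mul_neg, Real.cos_neg]; exact h0
  by_contra hcon
  push_neg at hcon
  have hspos : 0 < s := lt_of_le_of_lt (by positivity) hcon
  -- first, s ≤ π/2 (else k = 1 contradicts)
  have h1 : (1 : ℕ) ∈ Finset.Icc 1 n := Finset.mem_Icc.mpr ⟨le_rfl, hn⟩
  have hs_lt_pi : s < π := by
    rcases lt_or_eq_of_le (show s ≤ π from abs_le.mpr ⟨le_of_lt harg1, harg2⟩) with h | h
    · exact h
    · exfalso
      have := hcos 1 h1
      rw [Nat.cast_one, one_mul, h, Real.cos_pi] at this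
      linarith
  have hs_le : s ≤ π / 2 := by
    by_contra hgt
    push_neg at hgt
    have hneg : Real.cos s < 0 := Real.cos_neg_of_pi_div_two_lt_of_lt hgt (by linarith [Real.pi_pos])
    have hpos := hcos 1 h1
    rw [Nat.cast_one, one_mul] at hpos
    linarith
  -- choose smallest k with k * s > π/2
  set k : ℕ := Nat.floor ((π / 2) / s) + 1 with hk
  have hfl : (Nat.floor ((π / 2) / s) : ℝ) ≤ (π / 2) / s := Nat.floor_le (by positivity)
  have hk_gt : π / 2 < k * s := by
    have : (π / 2) / s < k := by
      rw [hk]; push_cast; exact Nat.lt_floor_add_one _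
    calc π / 2 = ((π / 2) / s) * s := (div_mul_cancel₀ _ hspos.ne').symm
    _ < k * s := mul_lt_mul_of_pos_right this hspos
  have hk_le : k ≤ n := by
    have hlt : (π / 2) / s < n := by
      rw [div_lt_iff₀ hspos]
      have : π / (2 * n) < s := hcon
      calc π / 2 = n * (π / (2 * n)) := by field_simp
      _ < n * s := by
        apply mul_lt_mul_of_pos_left this
        exact_mod_cast hn
    have : Nat.floor ((π / 2) / s) < n := by
      by_contra hge
      push_neg at hge
      have : (n : ℝ) ≤ Nat.floor ((π / 2) / s) := by exact_mod_cast hge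
      linarith
    omega
  have hk1 : 1 ≤ k := by omega
  have hks_lt : (k : ℝ) * s < π + π / 2 := by
    have : ((k : ℝ) - 1) * s ≤ π / 2 := by
      have : ((k : ℝ) - 1) = Nat.floor ((π / 2) / s) := by rw [hk]; push_cast; ring
      rw [this]
      calc (Nat.floor ((π / 2) / s) : ℝ) * s ≤ ((π / 2) / s) * s :=
            mul_le_mul_of_nonneg_right hfl (le_of_lt hspos)
      _ = π / 2 := div_mul_cancel₀ _ hspos.ne'
    nlinarith
  have : Real.cos (k * s) < 0 := Real.cos_neg_of_pi_div_two_lt_of_lt hk_gt hks_lt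
  have := hcos k (Finset.mem_Icc.mpr ⟨hk1, hk_le⟩)
  linarith

/-- A character maps `0` to `1`. -/
lemma IsChar.map_zero {χ : G → Circle} (h : IsChar G χ) : χ 0 = 1 := by
  have := h.2 0 0
  rw [add_zero] at this
  exact (mul_eq_left.mp this.symm)

lemma IsChar.pow {χ : G → Circle} (h : IsChar G χ) (k : ℕ) : IsChar G (χ ^ k) := by
  refine ⟨?_, ?_⟩
  · exact Continuous.pow h.1 k
  · intro x y
    simp only [Pi.pow_apply, h.2 x y, mul_pow]

lemma IsChar.map_nsmul {χ : G → Circle} (h : IsChar G χ) (c : G) (k : ℕ) :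
    χ (k • c) = χ c ^ k := by
  induction k with
  | zero => simp [h.map_zero G]
  | succ m ih => rw [succ_nsmul, h.2, ih, pow_succ]

/-- `k • c ∈ (m)C` whenever `k ≤ m`, `c ∈ C`, and `0 ∈ C`. -/
lemma nsmul_mem_addPow (C : Set G) (hC0 : (0 : G) ∈ C) (c : G) (hc : c ∈ C) :
    ∀ m k : ℕ, k ≤ m → k • c ∈ addPow G C m := by
  intro m
  induction m with
  | zero => intro k hk; interval_cases k; simp [addPow]
  | succ p ih =>
    intro k hk
    rcases Nat.lt_or_ge k (p + 1) with h | h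
    · have : k • c ∈ addPow G C p := ih k (by omega)
      have : k • c + 0 ∈ addPow G C p + C := Set.add_mem_add this hC0
      simpa [addPow] using this
    · have hkp : k = p + 1 := by omega
      subst hkp
      have : p • c ∈ addPow G C p := ih p le_rfl
      have : p • c + c ∈ addPow G C p + C := Set.add_mem_add this hc
      simpa [addPow, succ_nsmul] using this

theorem stmt8 (C : Set G) (hC0 : (0 : G) ∈ C) (n : ℕ) (hn : 0 < n) :
    polarG G (addPow G C n) = segMul G n (polarG G C) := by
  ext χ
  constructor
  · rintro ⟨hχ, hval⟩ k hk
    rw [Finset.mem_Icc] at hk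
    refine ⟨hχ.pow G k, ?_⟩
    intro c hc
    have hmem : k • c ∈ addPow G C n := nsmul_mem_addPow G C hC0 c hc n k hk.2
    have := hval _ hmem
    have hsm : χ (k • c) = (χ c) ^ k := hχ.map_nsmul G c k
    rw [Splus, Set.mem_setOf_eq, hsm] at this
    simpa [Splus, Pi.pow_apply] using this
  · intro hχ
    have h1 : (1 : ℕ) ∈ Finset.Icc 1 n := Finset.mem_Icc.mpr ⟨le_rfl, hn⟩
    have hchar : IsChar G χ := by
      have := (hχ 1 h1).1
      rwa [pow_one] at this
    refine ⟨hchar, ?_⟩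
    -- every element of C has χ-value with small argument
    have hsmall : ∀ c ∈ C, ∃ t : ℝ, |t| ≤ π / (2 * n) ∧ χ c = Circle.exp t := by
      intro c hc
      refine ⟨Complex.arg ((χ c : Circle) : ℂ), ?_, (Circle.exp_arg _).symm⟩
      apply arg_bound n hn
      intro k hk
      have := (hχ k hk).2 c hc
      simpa [Splus, Pi.pow_apply] using this
    -- induction: elements of (m)C map to exp of small argument
    have key : ∀ m : ℕ, ∀ g ∈ addPow G C m,
        ∃ t : ℝ, |t| ≤ m * (π / (2 * n)) ∧ χ g = Circle.exp t := by
      intro m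
      induction m with
      | zero =>
        intro g hg
        simp only [addPow, Set.mem_singleton_iff] at hg
        subst hg
        exact ⟨0, by simp, by simp [hchar.map_zero G]⟩
      | succ p ih =>
        intro g hg
        simp only [addPow] at hg
        rcases hg with ⟨a, ha, c, hc, rfl⟩
        obtain ⟨t₁, ht₁, he₁⟩ := ih a ha
        obtain ⟨t₂, ht₂, he₂⟩ := hsmall c hc
        refine ⟨t₁ + t₂, ?_, ?_⟩
        · calc |t₁ + t₂| ≤ |t₁| + |t₂| := abs_add_le _ _
          _ ≤ p * (π / (2 * n)) + π / (2 * n) := add_le_add ht₁ ht₂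
          _ = (p + 1) * (π / (2 * n)) := by ring
          _ = ((p + 1 : ℕ) : ℝ) * (π / (2 * n)) := by push_cast; ring
        · rw [hchar.2, he₁, he₂, Circle.exp_add]
    intro g hg
    obtain ⟨t, ht, he⟩ := key n g hg
    have hbound : |t| ≤ π / 2 := by
      have hn' : (0 : ℝ) < n := by exact_mod_cast hn
      calc |t| ≤ n * (π / (2 * n)) := ht
      _ = π / 2 := by field_simp
    rw [Splus, Set.mem_setOf_eq, he, Circle.re_exp]
    apply Real.cos_nonneg_of_mem_Icc
    rw [Set.mem_Icc]
    constructor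
    · have := abs_le.mp hbound
      linarith [this.1]
    · exact (abs_le.mp hbound).2
end

section
/- Let G be an abelian topological group and U a neighborhood of zero in G. Then the polar U^▷ = {χ ∈ Ĝ : χ(U) ⊆ S₊} is compact in the dual group Ĝ endowed with the compact-open topology, and hence also compact in the weak* topology σ(Ĝ, G). -/
open scoped Pointwise Topology
open Complex Real

variable (G : Type*) [AddCommGroup G] [TopologicalSpace G] [IsTopologicalAddGroup G]

section Aux

lemma splus_isClosed : IsClosed Splus :=
  isClosed_Ici.preimage (Complex.continuous_re.comp continuous_subtype_val)

lemma circle_coe_pow (z : Circle) (m : ℕ) : ((z ^ m : Circle) : ℂ) = (z : ℂ) ^ m :=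
  map_pow Circle.coeHom z m

/-- If `z, z², z⁴, …, z^(2^n)` all lie in `S₊`, then `|arg z| ≤ π / 2^(n+1)`. -/
lemma arg_le_of_pow_mem : ∀ (n : ℕ) (z : Circle),
    (∀ k ≤ n, z ^ (2 ^ k : ℕ) ∈ Splus) → |Complex.arg (z : ℂ)| ≤ π / 2 ^ (n + 1)
  | 0, z, h => by
    have h0 : (0 : ℝ) ≤ ((z ^ (1 : ℕ) : Circle) : ℂ).re := h 0 le_rfl
    rw [pow_one] at h0
    simpa using Complex.abs_arg_le_pi_div_two_iff.mpr h0
  | n + 1, z, h => by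
    have h0 : |Complex.arg (z : ℂ)| ≤ π / 2 := by
      have := h 0 (Nat.zero_le _)
      rw [pow_zero, pow_one] at this
      exact Complex.abs_arg_le_pi_div_two_iff.mpr this
    have hsq : |Complex.arg ((z ^ 2 : Circle) : ℂ)| ≤ π / 2 ^ (n + 1) := by
      apply arg_le_of_pow_mem n (z ^ 2)
      intro k hk
      have hpow : (z ^ 2) ^ (2 ^ k : ℕ) = z ^ (2 ^ (k + 1) : ℕ) := by
        rw [← pow_mul, pow_succ 2 k, mul_comm (2 ^ k) 2]
      rw [hpow]
      exact h (k + 1) (by omega)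
    set θ := Complex.arg (z : ℂ) with hθdef
    have hz : Circle.exp θ = z := Circle.exp_arg z
    by_cases hne : θ = -(π / 2)
    · exfalso
      have hz2 : z ^ 2 = Circle.exp (θ + θ) := by
        rw [Circle.exp_add, hz, sq]
      have hexp : Circle.exp (θ + θ) = Circle.exp π := by
        rw [hne, show -(π / 2) + -(π / 2) = π - 2 * π by ring]
        exact Circle.periodic_exp.sub_eq π
      have harg : Complex.arg ((z ^ 2 : Circle) : ℂ) = π := by
        rw [hz2, hexp, Circle.arg_exp (by linarith [Real.pi_pos]) le_rfl]
      rw [harg] at hsq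
      have h2n : (2 : ℝ) ≤ 2 ^ (n + 1) := by
        calc (2:ℝ) = 2 ^ 1 := (pow_one 2).symm
        _ ≤ 2 ^ (n + 1) := by
          apply pow_le_pow_right₀ one_le_two; omega
      have : π / 2 ^ (n + 1) ≤ π / 2 := by
        apply div_le_div_of_nonneg_left Real.pi_pos.le (by norm_num) h2n
      rw [abs_of_pos Real.pi_pos] at hsq
      linarith [Real.pi_pos]
    · have hθlb : -(π / 2) < θ := lt_of_le_of_ne (neg_le_of_abs_le h0) (Ne.symm hne)
      have hθub : θ ≤ π / 2 := le_of_abs_le h0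
      have hz2 : z ^ 2 = Circle.exp (θ + θ) := by rw [Circle.exp_add, hz, sq]
      have harg : Complex.arg ((z ^ 2 : Circle) : ℂ) = θ + θ := by
        rw [hz2, Circle.arg_exp (by linarith) (by linarith)]
      rw [harg] at hsq
      have h2 : 2 * |θ| ≤ π / 2 ^ (n + 1) := by
        calc 2 * |θ| = |θ + θ| := by rw [← two_mul, abs_mul]; norm_num
        _ ≤ π / 2 ^ (n + 1) := hsq
      rw [show n + 1 + 1 = (n + 1) + 1 from rfl, pow_succ, ← div_div]
      linarith

/-- Chord–arc estimate: `dist z 1 ≤ 2 |arg z|` when `|arg z| ≤ 1`. -/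
lemma circle_dist_one_le (z : Circle) (h : |Complex.arg (z : ℂ)| ≤ 1) :
    dist z (1 : Circle) ≤ 2 * |Complex.arg (z : ℂ)| := by
  have hz : (z : ℂ) = Complex.exp (Complex.arg (z : ℂ) * Complex.I) := by
    conv_lhs => rw [← Circle.exp_arg z]
    exact Circle.coe_exp _
  have habs : ‖((Complex.arg (z : ℂ) : ℂ) * Complex.I)‖ = |Complex.arg (z : ℂ)| := by
    simp [map_mul]
  calc dist z (1 : Circle) = ‖((z : ℂ) - 1)‖ := by
        erw [Subtype.dist_eq, Complex.dist_eq]; norm_cast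
  _ = ‖(Complex.exp ((Complex.arg (z : ℂ) : ℂ) * Complex.I) - 1)‖ := by rw [← hz]
  _ ≤ 2 * ‖((Complex.arg (z : ℂ) : ℂ) * Complex.I)‖ :=
        Complex.norm_exp_sub_one_le (by rw [habs]; exact h)
  _ = 2 * |Complex.arg (z : ℂ)| := by rw [habs]

variable {G}

lemma hom_map_zero {f : G → Circle} (hf : ∀ x y : G, f (x + y) = f x * f y) : f 0 = 1 := by
  have h := hf 0 0
  rw [add_zero] at h
  exact (left_eq_mul.mp h)

lemma hom_map_nsmul {f : G → Circle} (hf : ∀ x y : G, f (x + y) = f x * f y) (g : G) :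
    ∀ k : ℕ, f (k • g) = f g ^ k
  | 0 => by rw [zero_smul, pow_zero]; exact hom_map_zero hf
  | k + 1 => by rw [succ_nsmul, hf, hom_map_nsmul hf g k, pow_succ]

variable (G)

/-- The polar of a neighborhood of zero, inside all (not necessarily continuous) functions. -/
def polarT (U : Set G) : Set (G → Circle) :=
  {f | (∀ x y : G, f (x + y) = f x * f y) ∧ ∀ g ∈ U, f g ∈ Splus}

lemma polarT_equicontinuous (U : Set G) (hU : U ∈ 𝓝 (0 : G)) :
    Equicontinuous (fun f : polarT G U => (f : G → Circle)) := by
  intro x₀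
  refine (Metric.equicontinuousAt_iff_right).2 ?_
  intro ε hε
  -- choose `n` with `2 * (π / 2^(n+1)) < ε` and `π / 2^(n+1) ≤ 1`
  obtain ⟨n, hn⟩ := pow_unbounded_of_one_lt (max (2 * π / ε) π) (one_lt_two (α := ℝ))
  have h2n : (0 : ℝ) < 2 ^ (n + 1) := by positivity
  have hmax1 : 2 * π / ε < 2 ^ (n + 1) :=
    lt_of_le_of_lt (le_max_left _ _) (hn.trans_le (pow_le_pow_right₀ one_le_two (by omega)))
  have hmax2 : π < 2 ^ (n + 1) :=
    lt_of_le_of_lt (le_max_right _ _) (hn.trans_le (pow_le_pow_right₀ one_le_two (by omega)))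
  have hsmall : 2 * (π / 2 ^ (n + 1)) < ε := by
    rw [div_lt_iff₀ hε] at hmax1
    calc 2 * (π / 2 ^ (n + 1)) = 2 * π / 2 ^ (n + 1) := by ring
    _ < ε := by rw [div_lt_iff₀ h2n]; linarith [mul_comm ε ((2:ℝ) ^ (n+1))]
  have hone : π / 2 ^ (n + 1) ≤ 1 := by
    rw [div_le_one h2n]; exact hmax2.le
  -- the neighborhood
  set W : Set G := ⋂ k ∈ Finset.range (n + 1), (fun g : G => (2 ^ k : ℕ) • g) ⁻¹' U with hWdef
  have hW : W ∈ 𝓝 (0 : G) := by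
    rw [hWdef]
    refine (Filter.biInter_finset_mem _).mpr fun k _ => ?_
    have hc : Continuous fun g : G => (2 ^ k : ℕ) • g := continuous_nsmul _
    have := hc.continuousAt (x := (0 : G))
    refine this.preimage_mem_nhds ?_
    rwa [smul_zero]
  have key : ∀ f ∈ polarT G U, ∀ g ∈ W, dist (f g) (1 : Circle) < ε := by
    intro f hf g hg
    have hargs : ∀ k ≤ n, (f g) ^ (2 ^ k : ℕ) ∈ Splus := by
      intro k hk
      rw [← hom_map_nsmul hf.1 g (2 ^ k)]
      refine hf.2 _ ?_
      have := Set.mem_iInter₂.mp hg k (Finset.mem_range.mpr (by omega))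
      exact this
    have harg := arg_le_of_pow_mem n (f g) hargs
    calc dist (f g) (1 : Circle) ≤ 2 * |Complex.arg ((f g : Circle) : ℂ)| :=
          circle_dist_one_le _ (harg.trans hone)
    _ ≤ 2 * (π / 2 ^ (n + 1)) := by linarith
    _ < ε := hsmall
  -- conclude equicontinuity at x₀
  have hNmem : (fun x : G => x - x₀) ⁻¹' W ∈ 𝓝 x₀ := by
    have hc : Continuous fun x : G => x - x₀ := continuous_id.sub continuous_const
    have := hc.continuousAt (x := x₀)
    refine this.preimage_mem_nhds ?_
    rwa [sub_self]
  filter_upwards [hNmem] with x hx f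
  obtain ⟨f, hf⟩ := f
  show dist (f x₀) (f x) < ε
  have hfx : f x = f x₀ * f (x - x₀) := by
    have h1 : x₀ + (x - x₀) = x := by abel
    conv_lhs => rw [← h1]
    rw [hf.1]
  have hdist : dist (f x₀) (f x) = dist (f (x - x₀)) (1 : Circle) := by
    rw [hfx]; erw [Subtype.dist_eq, Subtype.dist_eq, Complex.dist_eq, Complex.dist_eq]
    rw [Circle.coe_mul]
    rw [show (f x₀ : ℂ) - (f x₀ : ℂ) * (f (x - x₀) : ℂ)
        = -((f x₀ : ℂ)) * ((f (x - x₀) : ℂ) - ((1 : Circle) : ℂ)) by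
      rw [Circle.coe_one]; ring]
    rw [norm_mul, norm_neg, Circle.norm_coe, one_mul]
  rw [hdist]
  exact key f hf _ hx

lemma polarT_isClosed (U : Set G) : IsClosed (polarT G U) := by
  have hrw : polarT G U = (⋂ x, ⋂ y, {f : G → Circle | f (x + y) = f x * f y})
      ∩ ⋂ g ∈ U, {f : G → Circle | f g ∈ Splus} := by
    ext f
    simp [polarT, Set.mem_iInter]
  rw [hrw]
  refine IsClosed.inter ?_ ?_
  · exact isClosed_iInter fun x => isClosed_iInter fun y =>
      isClosed_eq (continuous_apply (x + y)) ((continuous_apply x).mul (continuous_apply y))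
  · exact isClosed_iInter fun g => isClosed_iInter fun _ =>
      (splus_isClosed).preimage (continuous_apply g)

end Aux

theorem stmt11 (U : Set G) (hU : U ∈ 𝓝 (0 : G)) :
    IsCompact {χ : C(G, Circle) |
        (∀ x y : G, χ (x + y) = χ x * χ y) ∧ ∀ g ∈ U, χ g ∈ Splus} ∧
      IsCompact ((fun χ : C(G, Circle) => (χ : G → Circle)) ''
        {χ : C(G, Circle) |
          (∀ x y : G, χ (x + y) = χ x * χ y) ∧ ∀ g ∈ U, χ g ∈ Splus}) := by
  classical
  set S : Set C(G, Circle) := {χ : C(G, Circle) |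
      (∀ x y : G, χ (x + y) = χ x * χ y) ∧ ∀ g ∈ U, χ g ∈ Splus} with hSdef
  have hequi := polarT_equicontinuous G U hU
  have hTcompact : IsCompact (polarT G U) := (polarT_isClosed G U).isCompact
  have himg : ContinuousMap.toFun '' S = polarT G U := by
    ext f
    constructor
    · rintro ⟨χ, hχ, rfl⟩
      exact ⟨hχ.1, hχ.2⟩
    · intro hf
      have hc : Continuous f := hequi.continuous ⟨f, hf⟩
      exact ⟨⟨f, hc⟩, ⟨hf.1, hf.2⟩, rfl⟩
  have hS2 : Equicontinuous (fun χ : S => ((χ : C(G, Circle)) : G → Circle)) := by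
    have : (fun χ : S => ((χ : C(G, Circle)) : G → Circle))
        = (fun f : polarT G U => (f : G → Circle)) ∘
          (fun χ : S => (⟨(χ : C(G, Circle)), χ.2.1, χ.2.2⟩ : polarT G U)) := rfl
    rw [this]
    exact hequi.comp _
  have hS1 : IsCompact (ContinuousMap.toFun '' S) := himg ▸ hTcompact
  have hmain : IsCompact S := ArzelaAscoli.isCompact_of_equicontinuous S hS1 hS2
  refine ⟨hmain, ?_⟩
  have : (fun χ : C(G, Circle) => (χ : G → Circle)) '' S = ContinuousMap.toFun '' S := rfl
  rw [this]
  exact hS1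
end

section
/- Let (G, τ) be an abelian topological group of finite exponent, K ⊆ Ĝ a quasi-convex subset containing 0, and n a natural number with n > exp(G). Then ((n)K)^◁ = ⟨K⟩^⊤, i.e., g satisfies χ₁(g)⋯χₙ(g) ∈ S₊ for all χ₁,…,χₙ ∈ K if and only if χ(g) = 1 for all χ ∈ K. -/
open scoped Pointwise Topology
open Complex Real

variable (G : Type*) [AddCommGroup G] [TopologicalSpace G] [IsTopologicalAddGroup G]

/-! ### Auxiliary lemmas -/

lemma aux_root_pos (e : ℕ) (he : 2 ≤ e) (z : ℂ) (habs : ‖z‖ = 1)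
    (hze : z ^ e = 1) (hpos : 0 < Complex.arg z) :
    ∃ k : ℕ, 1 ≤ k ∧ k ≤ e ∧ (z ^ k).re < 0 := by
  set θ := Complex.arg z with hθdef
  have hθpi : θ ≤ π := Complex.arg_le_pi z
  have hz : z = Complex.exp (θ * Complex.I) := by
    conv_lhs => rw [← Complex.norm_mul_exp_arg_mul_I z]
    rw [habs, ofReal_one, one_mul]
  have hexp1 : Complex.exp ((e : ℂ) * (θ * Complex.I)) = 1 := by
    rw [Complex.exp_nat_mul, ← hz, hze]
  obtain ⟨m, hm⟩ := Complex.exp_eq_one_iff.mp hexp1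
  have hmθ : (e : ℝ) * θ = m * (2 * π) := by
    have him := congrArg Complex.im hm
    simpa using him
  have hπ := Real.pi_pos
  have he0 : (0:ℝ) < e := by positivity
  have hm1 : (1 : ℝ) ≤ m := by
    have h2 : (0:ℝ) < m * (2*π) := by rw [← hmθ]; positivity
    have hm0 : (0:ℝ) < m := by nlinarith
    have hm0' : (0:ℤ) < m := by exact_mod_cast hm0
    exact_mod_cast hm0'
  have hθlb : 2 * π / e ≤ θ := by
    rw [div_le_iff₀ he0]
    nlinarith
  set k : ℕ := ⌊π / (2 * θ)⌋₊ + 1 with hkdef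
  have hk1 : 1 ≤ k := Nat.le_add_left 1 _
  have hkub : (k : ℝ) ≤ π / (2 * θ) + 1 := by
    have := Nat.floor_le (by positivity : (0:ℝ) ≤ π / (2 * θ))
    push_cast [hkdef]; linarith
  have hklb : π / (2 * θ) < (k : ℝ) := by
    have := Nat.lt_floor_add_one (π / (2 * θ))
    push_cast [hkdef]; linarith
  have hkθ1 : π / 2 < k * θ := by
    rw [div_lt_iff₀ (by positivity : (0:ℝ) < 2 * θ)] at hklb
    nlinarith
  have hkθ2 : (k:ℝ) * θ ≤ π / 2 + θ := by
    have h := mul_le_mul_of_nonneg_right hkub hpos.le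
    have key : π / (2 * θ) * θ = π / 2 := by field_simp
    nlinarith
  have hkθ3 : (k:ℝ) * θ < π + π / 2 := by
    rcases le_or_gt θ (π / 2) with h | h
    · linarith
    · have hfl : ⌊π / (2 * θ)⌋₊ = 0 := by
        apply Nat.floor_eq_zero.mpr
        rw [div_lt_one (by positivity)]; linarith
      have : k = 1 := by rw [hkdef, hfl]
      rw [this]; push_cast; linarith
  have hke : k ≤ e := by
    have hub2 : π / (2 * θ) ≤ (e:ℝ) / 4 := by
      rw [div_le_div_iff₀ (by positivity) (by norm_num)]
      have h4 : 2 * π ≤ (e:ℝ) * θ := by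
        rw [div_le_iff₀ he0] at hθlb; linarith
      nlinarith
    have : (k:ℝ) ≤ e := by
      have he2 : (2:ℝ) ≤ e := by exact_mod_cast he
      linarith
    exact_mod_cast this
  refine ⟨k, hk1, hke, ?_⟩
  have hzk : z ^ k = Complex.exp ((↑((k:ℝ) * θ)) * Complex.I) := by
    rw [hz, ← Complex.exp_nat_mul]
    push_cast
    ring_nf
  rw [hzk, Complex.exp_ofReal_mul_I_re]
  exact Real.cos_neg_of_pi_div_two_lt_of_lt hkθ1 hkθ3

lemma aux_root (e : ℕ) (he : 1 ≤ e) (z : ℂ) (habs : ‖z‖ = 1)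
    (hze : z ^ e = 1) (hz1 : z ≠ 1) :
    ∃ k : ℕ, 1 ≤ k ∧ k ≤ e ∧ (z ^ k).re < 0 := by
  have he2 : 2 ≤ e := by
    rcases Nat.lt_or_ge e 2 with h | h
    · interval_cases e
      · simp at hze; exact absurd hze hz1
    · exact h
  rcases lt_trichotomy (Complex.arg z) 0 with h | h | h
  · have hargne : Complex.arg z ≠ π := by
      intro hc; rw [hc] at h; exact absurd h (not_lt.mpr Real.pi_pos.le)
    have harg : Complex.arg (starRingEnd ℂ z) = - Complex.arg z := by
      rw [Complex.arg_conj]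
      simp [hargne]
    have habs' : ‖starRingEnd ℂ z‖ = 1 := by
      rw [Complex.norm_conj]; exact habs
    have hze' : (starRingEnd ℂ z) ^ e = 1 := by
      rw [← map_pow, hze, map_one]
    obtain ⟨k, hk1, hke, hre⟩ := aux_root_pos e he2 _ habs' hze' (by rw [harg]; linarith)
    refine ⟨k, hk1, hke, ?_⟩
    rwa [← map_pow, Complex.conj_re] at hre
  · exfalso
    apply hz1
    have := Complex.norm_mul_exp_arg_mul_I z
    rw [habs, h] at this
    simpa using this.symm
  · exact aux_root_pos e he2 z habs hze h

lemma isChar_map_zero {χ : G → Circle} (hχ : IsChar G χ) : χ 0 = 1 := by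
  have h := hχ.2 0 0
  rw [add_zero] at h
  exact (mul_eq_left.mp h.symm)

lemma isChar_map_nsmul {χ : G → Circle} (hχ : IsChar G χ) (g : G) :
    ∀ k : ℕ, χ (k • g) = χ g ^ k := by
  intro k
  induction k with
  | zero => simpa using isChar_map_zero G hχ
  | succ k ih => rw [succ_nsmul, hχ.2, ih, pow_succ]

lemma mem_mpow_succ (K : Set (G → Circle)) (hK1 : (1 : G → Circle) ∈ K)
    {f : G → Circle} {m : ℕ} (hf : f ∈ mpow G K m) : f ∈ mpow G K (m + 1) := by
  simpa [mpow] using Set.mul_mem_mul hf hK1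

lemma pow_mem_mpow (K : Set (G → Circle)) {χ : G → Circle} (hχ : χ ∈ K) :
    ∀ k : ℕ, χ ^ k ∈ mpow G K k
  | 0 => by simp [mpow]
  | k + 1 => by
    rw [pow_succ]
    exact Set.mul_mem_mul (pow_mem_mpow K hχ k) hχ

lemma mem_mpow_of_le (K : Set (G → Circle)) (hK1 : (1 : G → Circle) ∈ K)
    {f : G → Circle} {k n : ℕ} (hkn : k ≤ n) (hf : f ∈ mpow G K k) :
    f ∈ mpow G K n := by
  induction hkn with
  | refl => exact hf
  | step h ih => exact mem_mpow_succ G K hK1 ih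

lemma mpow_apply_eq_one (K : Set (G → Circle)) {g : G} (hg : ∀ χ ∈ K, χ g = 1) :
    ∀ m, ∀ f ∈ mpow G K m, f g = 1
  | 0 => by intro f hf; simp [mpow] at hf; simp [hf]
  | m + 1 => by
    rintro f ⟨f', hf', χ, hχ, rfl⟩
    have h1 := mpow_apply_eq_one K hg m f' hf'
    have h2 := hg χ hχ
    simp [h1, h2]

theorem stmt19 (hexp : AddMonoid.exponent G ≠ 0)
    (K : Set (G → Circle)) (hK : K ⊆ charSet G) (hK1 : (1 : G → Circle) ∈ K)
    (hqc : K = polarG G (invPolar G K))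
    (n : ℕ) (hn : AddMonoid.exponent G < n) :
    invPolar G (mpow G K n) = {g : G | ∀ χ ∈ K, χ g = 1} := by
  ext g
  simp only [invPolar, Set.mem_setOf_eq]
  constructor
  · intro hg χ hχK
    set e := AddMonoid.exponent G with hedef
    have he1 : 1 ≤ e := Nat.one_le_iff_ne_zero.mpr hexp
    have hchar : IsChar G χ := hK hχK
    have hze : (χ g) ^ e = 1 := by
      rw [← isChar_map_nsmul G hchar, AddMonoid.exponent_nsmul_eq_zero,
        isChar_map_zero G hchar]
    by_contra hne
    have hze' : ((χ g : ℂ)) ^ e = 1 := by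
      exact_mod_cast congrArg (Circle.coeHom) hze
    have hne' : (χ g : ℂ) ≠ 1 := by
      rw [Ne, Circle.coe_eq_one]; exact hne
    obtain ⟨k, hk1, hke, hkre⟩ := aux_root e he1 (χ g : ℂ) (Circle.norm_coe _) hze' hne'
    have hmem : χ ^ k ∈ mpow G K n :=
      mem_mpow_of_le G K hK1 (le_of_lt (lt_of_le_of_lt hke hn))
        (pow_mem_mpow G K hχK k)
    have hsp := hg _ hmem
    simp only [Splus, Set.mem_setOf_eq, Pi.pow_apply] at hsp
    have hco : ((χ g ^ k : Circle) : ℂ) = (χ g : ℂ) ^ k := by exact_mod_cast rfl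
    rw [hco] at hsp
    linarith
  · intro hg f hf
    have h1 : f g = 1 := mpow_apply_eq_one G K hg n f hf
    simp [Splus, h1]
end
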